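/- In the FBD-α process, the boundary β_t is non-decreasing in t. -/

import Mathlib

open Real

/-- The mass of `μ` on the half-line `[x, ∞)`. -/
noncomputable def tailMass (μ : ℤ → ℝ) (x : ℤ) : ℝ := ∑' y : {y : ℤ // x ≤ y}, μ y

/-- The boundary `β = sup {x : μ([x,∞)) ≥ α/2}`. -/
noncomputable def bdry (α : ℝ) (μ : ℤ → ℝ) : ℤ := sSup {x : ℤ | α / 2 ≤ tailMass μ x}

/-- The frozen mass: the extreme `α/2` mass on each side of the origin. -/
noncomputable def frozen (α : ℝ) (μ : ℤ → ℝ) : ℤ → ℝ := fun y =>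
  let b := bdry α μ
  let v : ℤ → ℝ := fun w =>
    if b < w then μ w
    else if w = b then α / 2 - ∑' z : {z : ℤ // b < z}, μ z
    else 0
  if 0 ≤ y then v y else v (-y)

/-- The free mass `ν = μ - f`. -/
noncomputable def free (α : ℝ) (μ : ℤ → ℝ) : ℤ → ℝ := fun x => μ x - frozen α μ x

/-- One step of the Frozen-Boundary Diffusion:
`μ_{t+1}(x) = (ν_t(x-1) + ν_t(x+1))/2 + f_t(x)`. -/
noncomputable def FBDstep (α : ℝ) (μ : ℤ → ℝ) : ℤ → ℝ := fun x =>
  (free α μ (x - 1) + free α μ (x + 1)) / 2 + frozen α μ x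

/-- The Frozen-Boundary Diffusion with parameter `α`, started from `μ_0 = δ_0`. -/
noncomputable def FBD (α : ℝ) : ℕ → ℤ → ℝ
  | 0 => fun x => if x = 0 then 1 else 0
  | t + 1 => FBDstep α (FBD α t)

/-! ### Auxiliary lemmas -/

lemma tailMass_eq (μ : ℤ → ℝ) (x : ℤ) :
    tailMass μ x = ∑' y : ℤ, Set.indicator {y : ℤ | x ≤ y} μ y := by
  rw [tailMass, ← tsum_subtype]; rfl

lemma tailMass_antitone {μ : ℤ → ℝ} (hpos : ∀ x, 0 ≤ μ x) (hsum : Summable μ) :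
    Antitone (tailMass μ) := by
  intro a b hab
  rw [tailMass_eq, tailMass_eq]
  refine Summable.tsum_le_tsum (fun y => ?_) (hsum.indicator _) (hsum.indicator _)
  refine Set.indicator_le_indicator_of_subset (fun y hy => ?_) hpos y
  exact le_trans hab hy

lemma tailMass_split {μ : ℤ → ℝ} (hsum : Summable μ) (x : ℤ) :
    tailMass μ x = μ x + tailMass μ (x + 1) := by
  rw [tailMass_eq, tailMass_eq]
  have key : ∀ y : ℤ, Set.indicator {y : ℤ | x ≤ y} μ y
      = Set.indicator {x} μ y + Set.indicator {y : ℤ | x + 1 ≤ y} μ y := by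
    intro y
    by_cases h1 : y = x
    · subst h1
      simp [Set.indicator_apply, Set.mem_setOf_eq]
    · by_cases h2 : x ≤ y
      · have h3 : x + 1 ≤ y := by omega
        simp [Set.indicator_apply, Set.mem_setOf_eq, h1, h2, h3]
        exact fun h' => absurd h' (by omega)
      · have h3 : ¬ (x + 1 ≤ y) := by omega
        simp [Set.indicator_apply, Set.mem_setOf_eq, h1, h2, h3]
        exact fun h' => absurd h' (by omega)
    
  rw [tsum_congr key, Summable.tsum_add (hsum.indicator _) (hsum.indicator _)]
  congr 1
  rw [← tsum_subtype, tsum_singleton]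

lemma tsum_gt_eq_tailMass (μ : ℤ → ℝ) (b : ℤ) :
    (∑' z : {z : ℤ // b < z}, μ (z : ℤ)) = tailMass μ (b + 1) := by
  rw [tailMass]
  have hset : {z : ℤ | b < z} = {z : ℤ | b + 1 ≤ z} := by ext z; simp
  rw [show ((∑' z : {z : ℤ // b < z}, μ (z : ℤ)) = ∑' z : {z : ℤ | b < z}, μ (z : ℤ)) from rfl,
    hset]
  rfl

lemma exists_tailMass_lt {μ : ℤ → ℝ} (hpos : ∀ x, 0 ≤ μ x) (hsum : Summable μ)
    {ε : ℝ} (hε : 0 < ε) : ∃ x : ℤ, tailMass μ x < ε := by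
  have h := tendsto_tsum_compl_atTop_zero μ
  rw [Metric.tendsto_atTop] at h
  obtain ⟨s, hs⟩ := h ε hε
  have hss := hs s le_rfl
  obtain ⟨M, hM⟩ := s.exists_le
  refine ⟨M + 1, lt_of_le_of_lt ?_ (lt_of_abs_lt (by simpa [Real.dist_eq] using hss))⟩
  have h1 : (∑' a : {x : ℤ // x ∉ s}, μ (a : ℤ))
      = ∑' y : ℤ, Set.indicator {y : ℤ | y ∉ s} μ y := by
    rw [← tsum_subtype]; rfl
  rw [tailMass_eq, h1]
  refine Summable.tsum_le_tsum (fun y => ?_) (hsum.indicator _) (hsum.indicator _)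
  refine Set.indicator_le_indicator_of_subset (fun y hy => ?_) hpos y
  intro hmem
  exact absurd (hM y hmem) (by simp at hy ⊢; omega)

section main

variable {α : ℝ} {μ : ℤ → ℝ}

/-- The invariant carried through the induction. -/
structure FBDInv (α : ℝ) (μ : ℤ → ℝ) : Prop where
  sym : ∀ x, μ (-x) = μ x
  pos : ∀ x, 0 ≤ μ x
  sum : Summable μ
  tail0 : α / 2 ≤ tailMass μ 0

variable (hα : 0 < α) (hI : FBDInv α μ)

include hα hI

lemma bddAbove_S : BddAbove {x : ℤ | α / 2 ≤ tailMass μ x} := by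
  obtain ⟨x, hx⟩ := exists_tailMass_lt hI.pos hI.sum (half_pos hα)
  refine ⟨x, fun y hy => ?_⟩
  by_contra h
  push_neg at h
  exact absurd (le_trans hy (tailMass_antitone hI.pos hI.sum h.le)) (not_le.mpr hx)

lemma bdry_mem : α / 2 ≤ tailMass μ (bdry α μ) :=
  Int.csSup_mem ⟨0, hI.tail0⟩ (bddAbove_S hα hI)

lemma bdry_nonneg : 0 ≤ bdry α μ :=
  le_csSup (bddAbove_S hα hI) hI.tail0

lemma tail_succ_lt : tailMass μ (bdry α μ + 1) < α / 2 := by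
  by_contra h
  push_neg at h
  have h2 : bdry α μ + 1 ≤ bdry α μ :=
    le_csSup (bddAbove_S hα hI) (show bdry α μ + 1 ∈ _ from h)
  omega

lemma frozen_nonneg : ∀ x, 0 ≤ frozen α μ x := by
  have key : ∀ w : ℤ, 0 ≤ (if bdry α μ < w then μ w
      else if w = bdry α μ then α / 2 - ∑' z : {z : ℤ // bdry α μ < z}, μ (z : ℤ)
      else 0) := by
    intro w
    by_cases h1 : bdry α μ < w
    · simpa [h1] using hI.pos w
    · by_cases h2 : w = bdry α μ
      · subst h2
        rw [if_neg h1, if_pos rfl, tsum_gt_eq_tailMass]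
        linarith [tail_succ_lt hα hI]
      · simp [h1, h2]
  intro x
  unfold frozen
  by_cases h : 0 ≤ x <;> simp only [h, if_true, if_false] <;> exact key _

lemma frozen_le : ∀ x, frozen α μ x ≤ μ x := by
  have hsplit := tailMass_split hI.sum (bdry α μ)
  have hmem := bdry_mem hα hI
  have key : ∀ w : ℤ, (if bdry α μ < w then μ w
      else if w = bdry α μ then α / 2 - ∑' z : {z : ℤ // bdry α μ < z}, μ (z : ℤ)
      else 0) ≤ μ w := by
    intro w
    by_cases h1 : bdry α μ < w
    · simp [h1]
    · by_cases h2 : w = bdry α μ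
      · subst h2
        rw [if_neg h1, if_pos rfl, tsum_gt_eq_tailMass]
        linarith
      · simpa [h1, h2] using hI.pos w
  intro x
  unfold frozen
  by_cases h : 0 ≤ x
  · simpa [h] using key x
  · simp only [h, if_false]
    calc _ ≤ μ (-x) := key (-x)
    _ = μ x := hI.sym x

lemma frozen_sym : ∀ x, frozen α μ (-x) = frozen α μ x := by
  intro x
  unfold frozen
  rcases lt_trichotomy x 0 with h | h | h
  · have h1 : ¬ (0 ≤ x) := by omega
    have h2 : (0:ℤ) ≤ -x := by omega
    simp [h1, h2]
    exact fun h' => absurd h' (by omega)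
  · subst h; simp
  · have h1 : (0:ℤ) ≤ x := by omega
    have h2 : ¬ ((0:ℤ) ≤ -x) := by omega
    simp [h1, h2]
    exact fun h' => absurd h' (by omega)

lemma free_nonneg : ∀ x, 0 ≤ free α μ x := fun x =>
  sub_nonneg.mpr (frozen_le hα hI x)

lemma free_le : ∀ x, free α μ x ≤ μ x := fun x =>
  sub_le_self _ (frozen_nonneg hα hI x)

lemma free_sym : ∀ x, free α μ (-x) = free α μ x := fun x => by
  unfold free; rw [hI.sym, frozen_sym hα hI]

lemma frozen_summable : Summable (frozen α μ) :=
  Summable.of_nonneg_of_le (frozen_nonneg hα hI) (frozen_le hα hI) hI.sum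

lemma free_summable : Summable (free α μ) :=
  Summable.of_nonneg_of_le (free_nonneg hα hI) (free_le hα hI) hI.sum

lemma step_nonneg : ∀ x, 0 ≤ FBDstep α μ x := by
  intro x
  unfold FBDstep
  have h1 := free_nonneg hα hI (x - 1)
  have h2 := free_nonneg hα hI (x + 1)
  have h3 := frozen_nonneg hα hI x
  positivity

lemma step_sym : ∀ x, FBDstep α μ (-x) = FBDstep α μ x := by
  intro x
  unfold FBDstep
  rw [show (-x - 1 : ℤ) = -(x + 1) by ring, show (-x + 1 : ℤ) = -(x - 1) by ring,
    free_sym hα hI, free_sym hα hI, frozen_sym hα hI]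
  ring

lemma step_summable : Summable (FBDstep α μ) := by
  have h1 : Summable (fun x : ℤ => free α μ (x - 1)) := by
    have := ((Equiv.subRight (1:ℤ)).summable_iff (f := free α μ)).2 (free_summable hα hI)
    simpa [Function.comp_def] using this
  have h2 : Summable (fun x : ℤ => free α μ (x + 1)) := by
    have := ((Equiv.addRight (1:ℤ)).summable_iff (f := free α μ)).2 (free_summable hα hI)
    simpa [Function.comp_def] using this
  exact Summable.congr (((h1.add h2).div_const 2).add (frozen_summable hα hI)) (fun x => rfl)

omit hα hI in
lemma frozen_at_bdry (hb0 : 0 ≤ bdry α μ) :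
    frozen α μ (bdry α μ) = α / 2 - tailMass μ (bdry α μ + 1) := by
  simp [frozen, hb0, tsum_gt_eq_tailMass]

omit hα hI in
lemma frozen_at_gt {y : ℤ} (hy0 : 0 ≤ y) (hy : bdry α μ < y) : frozen α μ y = μ y := by
  simp only [frozen]
  rw [if_pos hy0, if_pos hy]

/-- The total frozen mass on `[b, ∞)` equals `α/2`. -/
lemma frozen_tail : tailMass (frozen α μ) (bdry α μ) = α / 2 := by
  have hb0 : 0 ≤ bdry α μ := bdry_nonneg hα hI
  obtain ⟨b, hb⟩ : ∃ b, bdry α μ = b := ⟨_, rfl⟩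
  have hfb : frozen α μ b = α / 2 - tailMass μ (b + 1) := hb ▸ frozen_at_bdry hb0
  have hfgt : ∀ y : ℤ, 0 ≤ y → b < y → frozen α μ y = μ y := fun y h1 h2 =>
    frozen_at_gt h1 (hb ▸ h2)
  rw [hb] at hb0 ⊢
  rw [tailMass_eq]
  have key : ∀ y : ℤ, Set.indicator {y : ℤ | b ≤ y} (frozen α μ) y
      = Set.indicator ({b} : Set ℤ) (fun _ => α / 2 - tailMass μ (b + 1)) y
        + Set.indicator {y : ℤ | b + 1 ≤ y} μ y := by
    intro y
    by_cases h1 : y = b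
    · rw [h1]
      have h2 : ¬ (b + 1 ≤ b) := by omega
      simp [Set.indicator_apply, Set.mem_setOf_eq, h2, hfb]
    · by_cases h2 : b ≤ y
      · have h3 : b + 1 ≤ y := by omega
        have h4 : frozen α μ y = μ y := hfgt y (by omega) (by omega)
        simp [Set.indicator_apply, Set.mem_setOf_eq, h1, h2, h3, h4]
        exact fun h' => absurd h' (by omega)
      · have h3 : ¬ (b + 1 ≤ y) := by omega
        simp [Set.indicator_apply, Set.mem_setOf_eq, h1, h2, h3]
        exact fun h' => absurd h' (by omega)
  rw [tsum_congr key, Summable.tsum_add ?hs1 (hI.sum.indicator _)]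
  case hs1 =>
    exact summable_of_ne_finset_zero (s := {b}) (fun y hy => by
      simp at hy; simp [Set.indicator_apply, hy])
  have h5 : (∑' y : ℤ, Set.indicator ({b} : Set ℤ) (fun _ => α / 2 - tailMass μ (b + 1)) y)
      = α / 2 - tailMass μ (b + 1) := by
    rw [← tsum_subtype]
    exact tsum_singleton b (fun _ => α / 2 - tailMass μ (b + 1))
  rw [h5, ← tailMass_eq]
  ring

lemma step_tail_ge : α / 2 ≤ tailMass (FBDstep α μ) (bdry α μ) := by
  rw [← frozen_tail hα hI, tailMass_eq, tailMass_eq]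
  refine Summable.tsum_le_tsum (fun y => ?_) ((frozen_summable hα hI).indicator _)
    ((step_summable hα hI).indicator _)
  by_cases h : bdry α μ ≤ y
  · simp only [Set.indicator_apply, Set.mem_setOf_eq, h, if_true]
    unfold FBDstep
    have h1 := free_nonneg hα hI (y - 1)
    have h2 := free_nonneg hα hI (y + 1)
    linarith
  · simp [Set.indicator_apply, Set.mem_setOf_eq, h]

lemma step_inv : FBDInv α (FBDstep α μ) := by
  refine ⟨step_sym hα hI, step_nonneg hα hI, step_summable hα hI, ?_⟩
  calc α / 2 ≤ tailMass (FBDstep α μ) (bdry α μ) := step_tail_ge hα hI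
  _ ≤ tailMass (FBDstep α μ) 0 :=
      tailMass_antitone (step_nonneg hα hI) (step_summable hα hI) (bdry_nonneg hα hI)

lemma bdry_le_step : bdry α μ ≤ bdry α (FBDstep α μ) :=
  le_csSup (bddAbove_S hα (step_inv hα hI)) (step_tail_ge hα hI)

end main

lemma FBD_inv {α : ℝ} (hα : α ∈ Set.Ioo (0:ℝ) 1) (t : ℕ) : FBDInv α (FBD α t) := by
  induction t with
  | zero =>
    constructor
    · intro x; simp [FBD, neg_eq_zero]
    · intro x; dsimp [FBD]; by_cases h : x = 0 <;> simp [h]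
    · exact summable_of_ne_finset_zero (s := ({0} : Finset ℤ))
        (fun b hb => by simp at hb; simp [FBD, hb])
    · have h1 : tailMass (FBD α 0) 1 = 0 := by
        rw [tailMass_eq]
        have : ∀ y : ℤ, Set.indicator {y : ℤ | 1 ≤ y} (FBD α 0) y = 0 := by
          intro y
          by_cases h : (1:ℤ) ≤ y
          · have : y ≠ 0 := by omega
            simp [Set.indicator_apply, Set.mem_setOf_eq, h, FBD, this]
          · simp [Set.indicator_apply, Set.mem_setOf_eq, h]
        rw [tsum_congr this, tsum_zero]
      have h2 : Summable (FBD α 0) := summable_of_ne_finset_zero (s := ({0} : Finset ℤ))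
        (fun b hb => by simp at hb; simp [FBD, hb])
      have h3 := tailMass_split h2 0
      rw [show (0:ℤ)+1 = 1 from rfl, h1] at h3
      have h4 : FBD α 0 0 = 1 := by simp [FBD]
      rw [h3, h4]
      obtain ⟨h5, h6⟩ := hα
      linarith
  | succ n ih => exact step_inv hα.1 ih

/-- In the FBD-α process, the boundary `β_t` is non-decreasing in `t`. -/
theorem stmt12 (α : ℝ) (hα : α ∈ Set.Ioo (0:ℝ) 1) (t : ℕ) :
    bdry α (FBD α t) ≤ bdry α (FBD α (t + 1)) :=
  bdry_le_step hα.1 (FBD_inv hα t)
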